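/- arXiv:2502.20932 — 3 statements merged into one kernel-verified Lean document; each statement's English description precedes it below -/
import Mathlib

section
/- Let d ≥ 1, let J be a d×d real matrix, and fix integers j, ℓ ≥ 0. For c ∈ ℝ^d, c_{d+1} ∈ ℝ and r > 0, define the anisotropic ball B((c,c_{d+1}), r) = { (y, y_{d+1}) ∈ ℝ^d × ℝ : |c - y| < r/2^{j+ℓ} and |c_{d+1} - y_{d+1} + ⟨J c, y⟩| < r²/2^{j+ℓ} }. If 0 < s ≤ r and B((x,x_{d+1}), r) ∩ B((y,y_{d+1}), s) ≠ ∅, then B((y,y_{d+1}), s) ⊆ B((x,x_{d+1}), 3r). -/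
open MeasureTheory

noncomputable def aniBall (d : ℕ) (J : EuclideanSpace ℝ (Fin d) →L[ℝ] EuclideanSpace ℝ (Fin d))
    (j l : ℕ) (c : EuclideanSpace ℝ (Fin d) × ℝ) (r : ℝ) :
    Set (EuclideanSpace ℝ (Fin d) × ℝ) :=
  {y | ‖c.1 - y.1‖ < r / 2 ^ (j + l) ∧
    |c.2 - y.2 + (inner ℝ (J c.1) y.1 : ℝ)| < r ^ 2 / 2 ^ (j + l)}

theorem stmt0 (d : ℕ) (hd : 1 ≤ d)
    (J : EuclideanSpace ℝ (Fin d) →L[ℝ] EuclideanSpace ℝ (Fin d)) (hJ : ‖J‖ ≤ 1)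
    (j l : ℕ) (x y : EuclideanSpace ℝ (Fin d) × ℝ) (r s : ℝ)
    (hs : 0 < s) (hsr : s ≤ r)
    (hne : (aniBall d J j l x r ∩ aniBall d J j l y s).Nonempty) :
    aniBall d J j l y s ⊆ aniBall d J j l x (3 * r) := by
  obtain ⟨z, ⟨hz1, hz2⟩, hz1', hz2'⟩ := hne
  rintro u ⟨hu1, hu2⟩
  have hr : 0 < r := hs.trans_le hsr
  set P : ℝ := 2 ^ (j + l) with hP
  have hP1 : (1:ℝ) ≤ P := one_le_pow₀ (by norm_num)
  have hP0 : (0:ℝ) < P := by linarith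
  have hxy : ‖x.1 - y.1‖ < r / P + s / P := by
    calc ‖x.1 - y.1‖ ≤ ‖x.1 - z.1‖ + ‖y.1 - z.1‖ := by
          rw [show x.1 - y.1 = (x.1 - z.1) - (y.1 - z.1) by abel]
          exact norm_sub_le _ _
      _ < r / P + s / P := by exact add_lt_add hz1 hz1'
  have huz : ‖u.1 - z.1‖ < s / P + s / P := by
    calc ‖u.1 - z.1‖ ≤ ‖y.1 - u.1‖ + ‖y.1 - z.1‖ := by
          rw [show u.1 - z.1 = (y.1 - z.1) - (y.1 - u.1) by abel]
          exact (norm_sub_le _ _).trans (by rw [add_comm])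
      _ < s / P + s / P := add_lt_add hu1 hz1'
  constructor
  · have h1 : ‖x.1 - u.1‖ ≤ ‖x.1 - y.1‖ + ‖y.1 - u.1‖ := by
      rw [show x.1 - u.1 = (x.1 - y.1) + (y.1 - u.1) by abel]
      exact norm_add_le _ _
    have : ‖x.1 - u.1‖ < r / P + s / P + s / P := by linarith
    calc ‖x.1 - u.1‖ < r / P + s / P + s / P := this
      _ ≤ 3 * r / P := by rw [← add_div, ← add_div]; gcongr <;> linarith
  · have hkey : x.2 - u.2 + (inner ℝ (J x.1) u.1 : ℝ) =
        (x.2 - z.2 + (inner ℝ (J x.1) z.1 : ℝ)) - (y.2 - z.2 + (inner ℝ (J y.1) z.1 : ℝ))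
        + (y.2 - u.2 + (inner ℝ (J y.1) u.1 : ℝ))
        + (inner ℝ (J (x.1 - y.1)) (u.1 - z.1) : ℝ) := by
      simp only [map_sub, inner_sub_left, inner_sub_right]
      ring
    have hip : |(inner ℝ (J (x.1 - y.1)) (u.1 - z.1) : ℝ)| ≤ ‖x.1 - y.1‖ * ‖u.1 - z.1‖ := by
      calc |(inner ℝ (J (x.1 - y.1)) (u.1 - z.1) : ℝ)| ≤ ‖J (x.1 - y.1)‖ * ‖u.1 - z.1‖ :=
            abs_real_inner_le_norm _ _
        _ ≤ ‖x.1 - y.1‖ * ‖u.1 - z.1‖ := by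
            gcongr
            calc ‖J (x.1 - y.1)‖ ≤ ‖J‖ * ‖x.1 - y.1‖ := J.le_opNorm _
              _ ≤ 1 * ‖x.1 - y.1‖ := by gcongr
              _ = ‖x.1 - y.1‖ := one_mul _
    have hT : |x.2 - u.2 + (inner ℝ (J x.1) u.1 : ℝ)| ≤
        |x.2 - z.2 + (inner ℝ (J x.1) z.1 : ℝ)| + |y.2 - z.2 + (inner ℝ (J y.1) z.1 : ℝ)|
        + |y.2 - u.2 + (inner ℝ (J y.1) u.1 : ℝ)| + ‖x.1 - y.1‖ * ‖u.1 - z.1‖ := by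
      rw [hkey]
      have := abs_add_le (x.2 - z.2 + (inner ℝ (J x.1) z.1 : ℝ)
          - (y.2 - z.2 + (inner ℝ (J y.1) z.1 : ℝ))
          + (y.2 - u.2 + (inner ℝ (J y.1) u.1 : ℝ))) ((inner ℝ (J (x.1 - y.1)) (u.1 - z.1) : ℝ))
      have h2 := abs_add_le (x.2 - z.2 + (inner ℝ (J x.1) z.1 : ℝ)
          - (y.2 - z.2 + (inner ℝ (J y.1) z.1 : ℝ))) (y.2 - u.2 + (inner ℝ (J y.1) u.1 : ℝ))
      have h3 := abs_sub (x.2 - z.2 + (inner ℝ (J x.1) z.1 : ℝ))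
          (y.2 - z.2 + (inner ℝ (J y.1) z.1 : ℝ))
      linarith
    have hmul : ‖x.1 - y.1‖ * ‖u.1 - z.1‖ < (r / P + s / P) * (s / P + s / P) := by
      apply mul_lt_mul'' hxy huz (norm_nonneg _) (norm_nonneg _)
    have hsP : s / P ≤ r / P := by gcongr
    have hP2 : P ≤ P ^ 2 := by nlinarith
    have : |x.2 - u.2 + (inner ℝ (J x.1) u.1 : ℝ)| <
        r ^ 2 / P + s ^ 2 / P + s ^ 2 / P + (r / P + s / P) * (s / P + s / P) := by
      linarith
    calc |x.2 - u.2 + (inner ℝ (J x.1) u.1 : ℝ)| <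
        r ^ 2 / P + s ^ 2 / P + s ^ 2 / P + (r / P + s / P) * (s / P + s / P) := this
      _ ≤ (3 * r) ^ 2 / P := by
          have h4 : (r / P + s / P) * (s / P + s / P) ≤ 4 * r ^ 2 / P := by
            rw [show (r / P + s / P) * (s / P + s / P) = ((r + s) * (2 * s)) / P ^ 2 by ring,
              div_le_div_iff₀ (by positivity) hP0]
            have hA : (r + s) * (2 * s) ≤ 4 * r ^ 2 := by nlinarith
            calc (r + s) * (2 * s) * P ≤ 4 * r ^ 2 * P :=
                  mul_le_mul_of_nonneg_right hA hP0.le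
              _ ≤ 4 * r ^ 2 * P ^ 2 := mul_le_mul_of_nonneg_left hP2 (by positivity)
          have h5 : s ^ 2 / P ≤ r ^ 2 / P := by gcongr
          have h6 : (3 * r) ^ 2 / P = 9 * (r ^ 2 / P) := by ring
          have h7 : (0:ℝ) ≤ r ^ 2 / P := by positivity
          have h8 : 4 * r ^ 2 / P = 4 * (r ^ 2 / P) := by ring
          rw [h6]; linarith
end

section
/- Let d ≥ 1, let J be a d×d real matrix with operator norm at most 1, and fix integers j, ℓ ≥ 0. Define the anisotropic balls B(c̄, r) as above. Let S ⊆ ℝ^{d+1} be measurable with S ⊆ ⋃_{i=1}^n B(x̄_i, r_i) for finitely many centers x̄_i and radii r_i > 0. Then there is a pairwise disjoint subcollection B_{i_1}, …, B_{i_m} of these balls such that ∑_{k=1}^m |B_{i_k}| ≥ 3^{-(d+2)} |S|. -/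
open MeasureTheory
open scoped ENNReal

lemma aniBall_isOpen (d : ℕ) (J : EuclideanSpace ℝ (Fin d) →L[ℝ] EuclideanSpace ℝ (Fin d))
    (j l : ℕ) (c : EuclideanSpace ℝ (Fin d) × ℝ) (r : ℝ) :
    IsOpen (aniBall d J j l c r) := by
  have h1 : IsOpen {y : EuclideanSpace ℝ (Fin d) × ℝ | ‖c.1 - y.1‖ < r / 2 ^ (j + l)} :=
    isOpen_lt (by fun_prop) continuous_const
  have h2 : IsOpen {y : EuclideanSpace ℝ (Fin d) × ℝ |
      |c.2 - y.2 + (inner ℝ (J c.1) y.1 : ℝ)| < r ^ 2 / 2 ^ (j + l)} := by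
    apply isOpen_lt _ continuous_const
    apply Continuous.abs
    exact (continuous_const.sub continuous_snd).add
      ((continuous_const.inner continuous_fst))
  exact (h1.inter h2)

lemma aniBall_nonempty (d : ℕ) (J : EuclideanSpace ℝ (Fin d) →L[ℝ] EuclideanSpace ℝ (Fin d))
    (j l : ℕ) (c : EuclideanSpace ℝ (Fin d) × ℝ) (r : ℝ) (hr : 0 < r) :
    (aniBall d J j l c r).Nonempty := by
  refine ⟨(c.1, c.2 + (inner ℝ (J c.1) c.1 : ℝ)), ?_, ?_⟩ <;> simp
  · positivity
  · positivity

lemma volume_aniBall (d : ℕ) (J : EuclideanSpace ℝ (Fin d) →L[ℝ] EuclideanSpace ℝ (Fin d))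
    (j l : ℕ) (c : EuclideanSpace ℝ (Fin d) × ℝ) (r : ℝ) :
    volume (aniBall d J j l c r) =
      ENNReal.ofReal (2 * r ^ 2 / 2 ^ (j + l)) *
        volume (Metric.ball c.1 (r / 2 ^ (j + l))) := by
  have hmeas : MeasurableSet (aniBall d J j l c r) :=
    (aniBall_isOpen d J j l c r).measurableSet
  rw [MeasureTheory.Measure.volume_eq_prod, Measure.prod_apply hmeas]
  have hfib : ∀ x : EuclideanSpace ℝ (Fin d),
      Prod.mk x ⁻¹' aniBall d J j l c r =
        if ‖c.1 - x‖ < r / 2 ^ (j + l) then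
          Set.Ioo (c.2 + (inner ℝ (J c.1) x : ℝ) - r ^ 2 / 2 ^ (j + l))
            (c.2 + (inner ℝ (J c.1) x : ℝ) + r ^ 2 / 2 ^ (j + l)) else ∅ := by
    intro x
    ext y
    by_cases hx : ‖c.1 - x‖ < r / 2 ^ (j + l) <;>
      simp [aniBall, hx, Set.mem_Ioo, abs_lt]
    constructor <;> intro h <;> constructor <;> linarith [h.1, h.2]
  calc ∫⁻ x, volume (Prod.mk x ⁻¹' aniBall d J j l c r)
      = ∫⁻ x, (Metric.ball c.1 (r / 2 ^ (j + l))).indicator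
          (fun _ => ENNReal.ofReal (2 * r ^ 2 / 2 ^ (j + l))) x := by
        congr 1
        ext x
        rw [hfib x]
        by_cases hx : ‖c.1 - x‖ < r / 2 ^ (j + l)
        · have hx' : x ∈ Metric.ball c.1 (r / 2 ^ (j + l)) := by
            rw [Metric.mem_ball, dist_eq_norm, ← norm_neg]
            simpa [neg_sub] using hx
          rw [if_pos hx, Set.indicator_of_mem hx', Real.volume_Ioo]
          congr 1
          ring
        · have hx' : x ∉ Metric.ball c.1 (r / 2 ^ (j + l)) := by
            rw [Metric.mem_ball, dist_eq_norm, ← norm_neg]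
            simpa [neg_sub] using hx
          rw [if_neg hx, Set.indicator_of_notMem hx']
          simp
    _ = ENNReal.ofReal (2 * r ^ 2 / 2 ^ (j + l)) *
          volume (Metric.ball c.1 (r / 2 ^ (j + l))) := by
        rw [lintegral_indicator measurableSet_ball, setLIntegral_const]

lemma volume_aniBall_three (d : ℕ)
    (J : EuclideanSpace ℝ (Fin d) →L[ℝ] EuclideanSpace ℝ (Fin d))
    (j l : ℕ) (c : EuclideanSpace ℝ (Fin d) × ℝ) (r : ℝ) (hr : 0 < r) :
    volume (aniBall d J j l c (3 * r)) =
      (3 : ℝ≥0∞) ^ (d + 2) * volume (aniBall d J j l c r) := by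
  have h2 : (0:ℝ) < 2 ^ (j + l) := by positivity
  rw [volume_aniBall, volume_aniBall]
  have hball : volume (Metric.ball c.1 (3 * r / 2 ^ (j + l))) =
      ENNReal.ofReal (3 ^ d) * volume (Metric.ball c.1 (r / 2 ^ (j + l))) := by
    have : 3 * r / 2 ^ (j + l) = 3 * (r / 2 ^ (j + l)) := by ring
    rw [this, Measure.addHaar_ball_mul_of_pos volume c.1 (by norm_num : (0:ℝ) < 3),
      finrank_euclideanSpace_fin, Measure.addHaar_ball_center volume c.1]
  rw [hball]
  have hq : 2 * (3 * r) ^ 2 / 2 ^ (j + l) = 9 * (2 * r ^ 2 / 2 ^ (j + l)) := by ring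
  rw [hq, ENNReal.ofReal_mul (by norm_num)]
  have h3 : ((3 : ℝ≥0∞) ^ (d + 2)) = ENNReal.ofReal 9 * ENNReal.ofReal (3 ^ d) := by
    rw [ENNReal.ofReal_pow (by norm_num : (0:ℝ) ≤ 3)]
    have e9 : (ENNReal.ofReal 9) = 9 := by norm_num
    have e3 : (ENNReal.ofReal 3) = 3 := by norm_num
    rw [e9, e3, pow_add]
    ring
  rw [h3]
  ring

lemma aniBall_engulf (d : ℕ)
    (J : EuclideanSpace ℝ (Fin d) →L[ℝ] EuclideanSpace ℝ (Fin d)) (hJ : ‖J‖ ≤ 1)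
    (j l : ℕ) (ca cb : EuclideanSpace ℝ (Fin d) × ℝ) (s r : ℝ)
    (hs : 0 < s) (hsr : s ≤ r)
    (hne : (aniBall d J j l ca s ∩ aniBall d J j l cb r).Nonempty) :
    aniBall d J j l ca s ⊆ aniBall d J j l cb (3 * r) := by
  obtain ⟨z, hza, hzb⟩ := hne
  intro x hx
  set h : ℝ := 2 ^ (j + l) with hh
  have h0 : (0:ℝ) < h := by positivity
  have h1 : (1:ℝ) ≤ h := one_le_pow₀ (by norm_num)
  obtain ⟨hza1, hza2⟩ := hza
  obtain ⟨hzb1, hzb2⟩ := hzb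
  obtain ⟨hx1, hx2⟩ := hx
  simp only [← hh] at hza1 hza2 hzb1 hzb2 hx1 hx2 ⊢
  clear_value h
  constructor
  · -- first coordinate
    rw [← hh]
    have key : ‖cb.1 - x.1‖ ≤ ‖cb.1 - z.1‖ + ‖ca.1 - z.1‖ + ‖ca.1 - x.1‖ := by
      have : cb.1 - x.1 = (cb.1 - z.1) + -(ca.1 - z.1) + (ca.1 - x.1) := by abel
      rw [this]
      refine (norm_add_le _ _).trans ?_
      gcongr
      refine (norm_add_le _ _).trans ?_
      rw [norm_neg]
    have hsh : s / h ≤ r / h := by gcongr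
    have : 3 * r / h = r / h + r / h + r / h := by ring
    rw [this]
    calc ‖cb.1 - x.1‖ ≤ ‖cb.1 - z.1‖ + ‖ca.1 - z.1‖ + ‖ca.1 - x.1‖ := key
      _ < r / h + s / h + s / h := by gcongr
      _ ≤ r / h + r / h + r / h := by gcongr
  · -- second coordinate
    set A : ℝ := cb.2 - z.2 + (inner ℝ (J cb.1) z.1 : ℝ) with hA
    set B : ℝ := ca.2 - z.2 + (inner ℝ (J ca.1) z.1 : ℝ) with hB
    set C : ℝ := ca.2 - x.2 + (inner ℝ (J ca.1) x.1 : ℝ) with hC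
    set D : ℝ := (inner ℝ (J cb.1 - J ca.1) (x.1 - z.1) : ℝ) with hD
    have hid : cb.2 - x.2 + (inner ℝ (J cb.1) x.1 : ℝ) = A - B + C + D := by
      rw [hA, hB, hC, hD, inner_sub_left, inner_sub_right, inner_sub_right]
      ring
    have hDb : |D| ≤ ((r + s) / h) * (2 * s / h) := by
      have e1 : ‖J cb.1 - J ca.1‖ ≤ (r + s) / h := by
        have : J cb.1 - J ca.1 = J (cb.1 - ca.1) := by rw [map_sub]
        rw [this]
        calc ‖J (cb.1 - ca.1)‖ ≤ ‖J‖ * ‖cb.1 - ca.1‖ := J.le_opNorm _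
          _ ≤ 1 * ‖cb.1 - ca.1‖ := mul_le_mul_of_nonneg_right hJ (norm_nonneg _)
          _ = ‖cb.1 - ca.1‖ := one_mul _
          _ ≤ ‖cb.1 - z.1‖ + ‖ca.1 - z.1‖ := by
              have : cb.1 - ca.1 = (cb.1 - z.1) + -(ca.1 - z.1) := by abel
              rw [this]
              refine (norm_add_le _ _).trans ?_
              rw [norm_neg]
          _ ≤ (r + s) / h := by
              rw [add_div]
              exact add_le_add hzb1.le hza1.le
      have e2 : ‖x.1 - z.1‖ ≤ 2 * s / h := by
        calc ‖x.1 - z.1‖ ≤ ‖ca.1 - x.1‖ + ‖ca.1 - z.1‖ := by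
              have : x.1 - z.1 = -(ca.1 - x.1) + (ca.1 - z.1) := by abel
              rw [this]
              refine (norm_add_le _ _).trans ?_
              rw [norm_neg]
          _ ≤ 2 * s / h := by
              have : 2 * s / h = s / h + s / h := by ring
              rw [this]
              exact add_le_add hx1.le hza1.le
      calc |D| ≤ ‖J cb.1 - J ca.1‖ * ‖x.1 - z.1‖ := abs_real_inner_le_norm _ _
        _ ≤ ((r + s) / h) * (2 * s / h) := by
            exact mul_le_mul e1 e2 (norm_nonneg _) (div_nonneg (by linarith) h0.le)
    rw [hid, ← hh]
    clear_value A B C D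
    have habs : |A - B + C + D| ≤ |A| + |B| + |C| + |D| := by
      calc |A - B + C + D| ≤ |A - B + C| + |D| := abs_add_le _ _
        _ ≤ |A - B| + |C| + |D| := by gcongr; exact abs_add_le _ _
        _ ≤ |A| + |B| + |C| + |D| := by gcongr; exact abs_sub _ _
    have hrh : 0 < r := lt_of_lt_of_le hs hsr
    have hinv : (0:ℝ) < 1 / h := by positivity
    have hinv1 : 1 / h ≤ 1 := by
      rw [div_le_one h0]; exact h1
    -- final arithmetic
    have goal : |A| + |B| + |C| + |D| < (3 * r) ^ 2 / h := by
      have b1 : |A| < r ^ 2 / h := hzb2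
      have b2 : |B| < s ^ 2 / h := hza2
      have b3 : |C| < s ^ 2 / h := hx2
      have key : ((r + s) / h) * (2 * s / h) ≤ 4 * r ^ 2 / h := by
        rw [div_mul_div_comm, div_le_div_iff₀ (by positivity) h0]
        have k1 : (r + s) * (2 * s) ≤ 4 * r ^ 2 := by nlinarith [sq_nonneg (r - s), hs, hsr]
        have k2 : h ≤ h * h := le_mul_of_one_le_left h0.le h1
        calc (r + s) * (2 * s) * h ≤ 4 * r ^ 2 * h := mul_le_mul_of_nonneg_right k1 h0.le
          _ ≤ 4 * r ^ 2 * (h * h) := mul_le_mul_of_nonneg_left k2 (by positivity)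
      have step : |A| + |B| + |C| + |D| < r ^ 2 / h + s ^ 2 / h + s ^ 2 / h + 4 * r ^ 2 / h := by
        linarith [hDb.trans key]
      have step2 : r ^ 2 / h + s ^ 2 / h + s ^ 2 / h + 4 * r ^ 2 / h ≤ (3 * r) ^ 2 / h := by
        rw [← add_div, ← add_div, ← add_div]
        gcongr
        nlinarith [hsr, hs]
      linarith
    exact lt_of_le_of_lt habs goal

theorem stmt2 (d : ℕ) (hd : 1 ≤ d)
    (J : EuclideanSpace ℝ (Fin d) →L[ℝ] EuclideanSpace ℝ (Fin d)) (hJ : ‖J‖ ≤ 1)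
    (j l : ℕ) (S : Set (EuclideanSpace ℝ (Fin d) × ℝ)) (hS : MeasurableSet S)
    (n : ℕ) (c : Fin n → EuclideanSpace ℝ (Fin d) × ℝ) (r : Fin n → ℝ)
    (hr : ∀ i, 0 < r i) (hcov : S ⊆ ⋃ i, aniBall d J j l (c i) (r i)) :
    ∃ t : Finset (Fin n),
      ((t : Set (Fin n)).Pairwise fun i i' =>
        Disjoint (aniBall d J j l (c i) (r i)) (aniBall d J j l (c i') (r i'))) ∧
      ((3 : ℝ≥0∞) ^ (d + 2))⁻¹ * volume S ≤ ∑ i ∈ t, volume (aniBall d J j l (c i) (r i)) := by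
  -- choose τ > 1 so that r a ≤ τ * r b → r a ≤ r b
  obtain ⟨τ, hτ1, hτ⟩ : ∃ τ : ℝ, 1 < τ ∧ ∀ a b : Fin n, r a ≤ τ * r b → r a ≤ r b := by
    classical
    set F : Finset (Fin n × Fin n) :=
      Finset.univ.filter (fun p => r p.2 < r p.1) with hF
    by_cases hFe : F.Nonempty
    · set G : Finset ℝ := F.image (fun p => r p.1 / r p.2) with hG
      have hGne : G.Nonempty := hFe.image _
      set m : ℝ := G.min' hGne with hm
      have hm1 : 1 < m := by
        obtain ⟨p, hp, hpm⟩ := Finset.mem_image.1 (G.min'_mem hGne)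
        rw [hm, ← hpm]
        have hp' : r p.2 < r p.1 := (Finset.mem_filter.1 hp).2
        rw [lt_div_iff₀ (hr p.2), one_mul]
        exact hp'
      refine ⟨(1 + m) / 2, by linarith, fun a b hab => ?_⟩
      by_contra hba
      push_neg at hba
      have hmem : (a, b) ∈ F := by
        simp [hF, hba]
      have hle : m ≤ r a / r b := G.min'_le _ (Finset.mem_image_of_mem _ hmem)
      have : r a / r b ≤ (1 + m) / 2 := by
        rw [div_le_iff₀ (hr b)]
        exact hab
      linarith
    · refine ⟨2, by norm_num, fun a b hab => ?_⟩
      by_contra hba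
      push_neg at hba
      exact hFe ⟨(a, b), by simp [hF, hba]⟩
  classical
  rcases Nat.eq_zero_or_pos n with hn | hn
  · -- no balls: S is empty
    subst hn
    refine ⟨∅, by simp, ?_⟩
    have : S = ∅ := by
      apply Set.eq_empty_iff_forall_notMem.2
      intro x hx
      obtain ⟨i, -⟩ := Set.mem_iUnion.1 (hcov hx)
      exact i.elim0
    simp [this]
  have huniv : (Finset.univ : Finset (Fin n)).Nonempty := by
    rw [Finset.univ_nonempty_iff]
    exact Fin.pos_iff_nonempty.1 hn
  obtain ⟨R, hR⟩ : ∃ R : ℝ, ∀ a : Fin n, r a ≤ R :=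
    ⟨(Finset.univ.image r).max' (huniv.image r), fun a =>
      Finset.le_max' _ _ (Finset.mem_image_of_mem r (Finset.mem_univ a))⟩
  -- apply the general Vitali lemma
  obtain ⟨u, -, hdisj, hsub⟩ :=
    Vitali.exists_disjoint_subfamily_covering_enlargement
      (fun i => aniBall d J j l (c i) (r i)) Set.univ r τ hτ1
      (fun a _ => (hr a).le) R (fun a _ => hR a)
      (fun a _ => aniBall_nonempty d J j l (c a) (r a) (hr a))
  have hufin : u.Finite := Set.toFinite u
  refine ⟨hufin.toFinset, ?_, ?_⟩
  · intro i hi i' hi' hne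
    rw [Set.Finite.coe_toFinset] at hi hi'
    exact hdisj hi hi' hne
  · -- covering by enlarged balls
    have hcov3 : S ⊆ ⋃ b ∈ hufin.toFinset, aniBall d J j l (c b) (3 * r b) := by
      intro x hx
      obtain ⟨a, ha⟩ := Set.mem_iUnion.1 (hcov hx)
      obtain ⟨b, hb, hint, hab⟩ := hsub a (Set.mem_univ a)
      have hab' : r a ≤ r b := hτ a b hab
      refine Set.mem_biUnion (hufin.mem_toFinset.2 hb) ?_
      exact aniBall_engulf d J hJ j l (c a) (c b) (r a) (r b) (hr a) hab' hint ha
    have hvol : volume S ≤ (3 : ℝ≥0∞) ^ (d + 2) *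
        ∑ i ∈ hufin.toFinset, volume (aniBall d J j l (c i) (r i)) := by
      calc volume S ≤ volume (⋃ b ∈ hufin.toFinset, aniBall d J j l (c b) (3 * r b)) :=
            measure_mono hcov3
        _ ≤ ∑ b ∈ hufin.toFinset, volume (aniBall d J j l (c b) (3 * r b)) :=
            measure_biUnion_finset_le _ _
        _ = ∑ b ∈ hufin.toFinset, (3 : ℝ≥0∞) ^ (d + 2) * volume (aniBall d J j l (c b) (r b)) := by
            apply Finset.sum_congr rfl
            intro b _
            exact volume_aniBall_three d J j l (c b) (r b) (hr b)
        _ = (3 : ℝ≥0∞) ^ (d + 2) *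
              ∑ i ∈ hufin.toFinset, volume (aniBall d J j l (c i) (r i)) := by
            rw [Finset.mul_sum]
    have h3ne : ((3 : ℝ≥0∞) ^ (d + 2)) ≠ 0 := by
      apply pow_ne_zero; norm_num
    have h3top : ((3 : ℝ≥0∞) ^ (d + 2)) ≠ ⊤ := by
      apply ENNReal.pow_ne_top; norm_num
    calc ((3 : ℝ≥0∞) ^ (d + 2))⁻¹ * volume S
        ≤ ((3 : ℝ≥0∞) ^ (d + 2))⁻¹ * ((3 : ℝ≥0∞) ^ (d + 2) *
            ∑ i ∈ hufin.toFinset, volume (aniBall d J j l (c i) (r i))) := by gcongr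
      _ = ∑ i ∈ hufin.toFinset, volume (aniBall d J j l (c i) (r i)) := by
          rw [← mul_assoc, ENNReal.inv_mul_cancel h3ne h3top, one_mul]
end

section
/- Let {T_k}_{k∈ℤ} be a family of bounded operators from L²(M₁) to L²(M₂) (measure spaces M₁, M₂). Suppose ‖T_{k₁} T_{k₂}^*‖_{op} ≤ C(|k₁ - k₂|) for all k₁, k₂, where ∑_{k∈ℤ} √(C(|k|)) < ∞. Then for all f ∈ L²(M₁), ‖(∑_{k∈ℤ} |T_k f|²)^{1/2}‖_{L²(M₂)} ≤ C' (sup_k ‖T_k‖_{op} · ∑_{k∈ℤ} √(C(|k|)))^{1/2} ‖f‖_{L²(M₁)} for an absolute constant C'. -/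
open MeasureTheory ContinuousLinearMap
open scoped ENNReal InnerProductSpace ComplexConjugate

section Aux

variable {H1 H2 : Type*} [NormedAddCommGroup H1] [InnerProductSpace ℂ H1]
  [NormedAddCommGroup H2] [InnerProductSpace ℂ H2] [CompleteSpace H1] [CompleteSpace H2]

lemma aux_finsum (T : ℤ → H1 →L[ℂ] H2) (C : ℕ → ℝ) (hC : ∀ n, 0 ≤ C n)
    (hTT : ∀ k₁ k₂ : ℤ, ‖(T k₁).comp (adjoint (T k₂))‖ ≤ C (k₁ - k₂).natAbs)
    (hS : Summable fun k : ℤ => Real.sqrt (C k.natAbs))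
    (f : H1) (F : Finset ℤ) :
    ∑ k ∈ F, ‖T k f‖ ^ 2 ≤
      (⨆ k : ℤ, ‖T k‖) * (∑' k : ℤ, Real.sqrt (C k.natAbs)) * ‖f‖ ^ 2 := by
  set M : ℝ := ⨆ k : ℤ, ‖T k‖ with hM
  set S : ℝ := ∑' k : ℤ, Real.sqrt (C k.natAbs) with hSdef
  -- each operator norm is bounded
  have hTbound : ∀ k : ℤ, ‖T k‖ ≤ Real.sqrt (C 0) := by
    intro k
    have h1 : ‖(T k).comp (adjoint (T k))‖ = ‖T k‖ * ‖T k‖ := by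
      have := norm_adjoint_comp_self (adjoint (T k))
      rwa [adjoint_adjoint, LinearIsometryEquiv.norm_map] at this
    have h2 := hTT k k
    simp only [sub_self, Int.natAbs_zero] at h2
    rw [h1] at h2
    have := Real.sqrt_le_sqrt h2
    rwa [← Real.sqrt_mul_self (norm_nonneg (T k))]
  have hbdd : BddAbove (Set.range fun k : ℤ => ‖T k‖) := by
    exact ⟨Real.sqrt (C 0), by rintro _ ⟨k, rfl⟩; exact hTbound k⟩
  have hMk : ∀ k : ℤ, ‖T k‖ ≤ M := fun k => le_ciSup hbdd k
  have hM0 : 0 ≤ M := (norm_nonneg (T 0)).trans (hMk 0)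
  have hS0 : 0 ≤ S := tsum_nonneg fun k => Real.sqrt_nonneg _
  -- the aggregated vector
  set g : H1 := ∑ a ∈ F, (adjoint (T a)) (T a f) with hg
  set Sig : ℝ := ∑ k ∈ F, ‖T k f‖ ^ 2 with hSg
  have hSg0 : 0 ≤ Sig := Finset.sum_nonneg fun k _ => sq_nonneg _
  -- Sig = re ⟪g, f⟫
  have hSgeq : Sig = RCLike.re (⟪g, f⟫_ℂ) := by
    rw [hg, sum_inner, map_sum]
    refine Finset.sum_congr rfl fun a _ => ?_
    rw [adjoint_inner_left, inner_self_eq_norm_sq]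
  have hSgle : Sig ≤ ‖g‖ * ‖f‖ := by
    rw [hSgeq]
    exact (RCLike.re_le_norm _).trans (norm_inner_le_norm g f)
  -- cross terms bound
  have hcross : ∀ a b : ℤ,
      RCLike.re (⟪(adjoint (T a)) (T a f), (adjoint (T b)) (T b f)⟫_ℂ) ≤
        Real.sqrt (C (b - a).natAbs) * M * (‖T a f‖ * ‖T b f‖) := by
    intro a b
    have heq : ⟪(adjoint (T a)) (T a f), (adjoint (T b)) (T b f)⟫_ℂ =
        ⟪((T b).comp (adjoint (T a))) (T a f), T b f⟫_ℂ := by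
      rw [adjoint_inner_right]; rfl
    have hnorm : ‖(T b).comp (adjoint (T a))‖ ≤ Real.sqrt (C (b - a).natAbs) * M := by
      have h1 : ‖(T b).comp (adjoint (T a))‖ ≤ C (b - a).natAbs := hTT b a
      have h2 : ‖(T b).comp (adjoint (T a))‖ ≤ M * M := by
        calc ‖(T b).comp (adjoint (T a))‖ ≤ ‖T b‖ * ‖adjoint (T a)‖ := opNorm_comp_le _ _
          _ = ‖T b‖ * ‖T a‖ := by rw [LinearIsometryEquiv.norm_map]
          _ ≤ M * M := mul_le_mul (hMk b) (hMk a) (norm_nonneg _) hM0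
      have hsq : ‖(T b).comp (adjoint (T a))‖ ^ 2 ≤ C (b - a).natAbs * (M * M) := by
        rw [sq]
        exact mul_le_mul h1 h2 (norm_nonneg _) (hC _)
      calc ‖(T b).comp (adjoint (T a))‖
          = Real.sqrt (‖(T b).comp (adjoint (T a))‖ ^ 2) := (Real.sqrt_sq (norm_nonneg _)).symm
        _ ≤ Real.sqrt (C (b - a).natAbs * (M * M)) := Real.sqrt_le_sqrt hsq
        _ = Real.sqrt (C (b - a).natAbs) * M := by
            rw [Real.sqrt_mul (hC _), Real.sqrt_mul_self hM0]
    calc RCLike.re (⟪(adjoint (T a)) (T a f), (adjoint (T b)) (T b f)⟫_ℂ)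
        ≤ ‖⟪(adjoint (T a)) (T a f), (adjoint (T b)) (T b f)⟫_ℂ‖ := RCLike.re_le_norm _
      _ = ‖⟪((T b).comp (adjoint (T a))) (T a f), T b f⟫_ℂ‖ := by rw [heq]
      _ ≤ ‖((T b).comp (adjoint (T a))) (T a f)‖ * ‖T b f‖ := norm_inner_le_norm _ _
      _ ≤ (‖(T b).comp (adjoint (T a))‖ * ‖T a f‖) * ‖T b f‖ :=
          mul_le_mul_of_nonneg_right (le_opNorm _ _) (norm_nonneg _)
      _ ≤ (Real.sqrt (C (b - a).natAbs) * M * ‖T a f‖) * ‖T b f‖ :=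
          mul_le_mul_of_nonneg_right
            (mul_le_mul_of_nonneg_right hnorm (norm_nonneg _)) (norm_nonneg _)
      _ = Real.sqrt (C (b - a).natAbs) * M * (‖T a f‖ * ‖T b f‖) := by ring
  -- row sums bounded by S
  have hrow : ∀ a : ℤ, ∀ G : Finset ℤ, ∑ b ∈ G, Real.sqrt (C (b - a).natAbs) ≤ S := by
    intro a G
    have hsum : Summable fun b : ℤ => Real.sqrt (C (b - a).natAbs) :=
      (Equiv.subRight a).summable_iff.mpr hS |>.congr (fun b => rfl)
    have hle := Summable.sum_le_tsum G (fun b _ => Real.sqrt_nonneg _) hsum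
    have heq : ∑' b : ℤ, Real.sqrt (C (b - a).natAbs) = S := by
      rw [hSdef, ← (Equiv.subRight a).tsum_eq fun k : ℤ => Real.sqrt (C k.natAbs)]
      rfl
    rw [heq] at hle
    exact hle
  -- ‖g‖² ≤ M * S * Sig
  have hg2 : ‖g‖ ^ 2 ≤ M * S * Sig := by
    have hgg : ‖g‖ ^ 2 = RCLike.re (⟪g, g⟫_ℂ) := (inner_self_eq_norm_sq g).symm
    have hexp : RCLike.re (⟪g, g⟫_ℂ) =
        ∑ a ∈ F, ∑ b ∈ F,
          RCLike.re (⟪(adjoint (T a)) (T a f), (adjoint (T b)) (T b f)⟫_ℂ) := by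
      rw [hg, sum_inner]
      rw [map_sum]
      refine Finset.sum_congr rfl fun a _ => ?_
      rw [inner_sum, map_sum]
    rw [hgg, hexp]
    have hterm : ∀ a ∈ F, ∀ b ∈ F,
        RCLike.re (⟪(adjoint (T a)) (T a f), (adjoint (T b)) (T b f)⟫_ℂ) ≤
          M * (Real.sqrt (C (b - a).natAbs) *
            ((‖T a f‖ ^ 2 + ‖T b f‖ ^ 2) / 2)) := by
      intro a _ b _
      refine (hcross a b).trans ?_
      have hAM : ‖T a f‖ * ‖T b f‖ ≤ (‖T a f‖ ^ 2 + ‖T b f‖ ^ 2) / 2 := by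
        nlinarith [sq_nonneg (‖T a f‖ - ‖T b f‖)]
      have := mul_le_mul_of_nonneg_left hAM
        (mul_nonneg (Real.sqrt_nonneg (C (b - a).natAbs)) hM0)
      calc Real.sqrt (C (b - a).natAbs) * M * (‖T a f‖ * ‖T b f‖)
          ≤ Real.sqrt (C (b - a).natAbs) * M * ((‖T a f‖ ^ 2 + ‖T b f‖ ^ 2) / 2) := this
        _ = M * (Real.sqrt (C (b - a).natAbs) * ((‖T a f‖ ^ 2 + ‖T b f‖ ^ 2) / 2)) := by ring
    calc ∑ a ∈ F, ∑ b ∈ F,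
          RCLike.re (⟪(adjoint (T a)) (T a f), (adjoint (T b)) (T b f)⟫_ℂ)
        ≤ ∑ a ∈ F, ∑ b ∈ F, M * (Real.sqrt (C (b - a).natAbs) *
            ((‖T a f‖ ^ 2 + ‖T b f‖ ^ 2) / 2)) := by
          refine Finset.sum_le_sum fun a ha => Finset.sum_le_sum fun b hb => ?_
          exact hterm a ha b hb
      _ = M * ((∑ a ∈ F, ∑ b ∈ F, Real.sqrt (C (b - a).natAbs) * ‖T a f‖ ^ 2) / 2 +
            (∑ a ∈ F, ∑ b ∈ F, Real.sqrt (C (b - a).natAbs) * ‖T b f‖ ^ 2) / 2) := by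
          simp only [mul_add, Finset.sum_div, Finset.mul_sum, ← Finset.sum_add_distrib]
          refine Finset.sum_congr rfl fun a _ => Finset.sum_congr rfl fun b _ => by ring
      _ ≤ M * (S * Sig / 2 + S * Sig / 2) := by
          refine mul_le_mul_of_nonneg_left ?_ hM0
          have h1 : (∑ a ∈ F, ∑ b ∈ F, Real.sqrt (C (b - a).natAbs) * ‖T a f‖ ^ 2) ≤ S * Sig := by
            calc ∑ a ∈ F, ∑ b ∈ F, Real.sqrt (C (b - a).natAbs) * ‖T a f‖ ^ 2
                = ∑ a ∈ F, (∑ b ∈ F, Real.sqrt (C (b - a).natAbs)) * ‖T a f‖ ^ 2 := by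
                  refine Finset.sum_congr rfl fun a _ => ?_
                  rw [Finset.sum_mul]
              _ ≤ ∑ a ∈ F, S * ‖T a f‖ ^ 2 := by
                  refine Finset.sum_le_sum fun a _ => ?_
                  exact mul_le_mul_of_nonneg_right (hrow a F) (sq_nonneg _)
              _ = S * Sig := by rw [hSg, Finset.mul_sum]
          have h2 : (∑ a ∈ F, ∑ b ∈ F, Real.sqrt (C (b - a).natAbs) * ‖T b f‖ ^ 2) ≤ S * Sig := by
            rw [Finset.sum_comm]
            calc ∑ b ∈ F, ∑ a ∈ F, Real.sqrt (C (b - a).natAbs) * ‖T b f‖ ^ 2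
                = ∑ b ∈ F, (∑ a ∈ F, Real.sqrt (C (a - b).natAbs)) * ‖T b f‖ ^ 2 := by
                  refine Finset.sum_congr rfl fun b _ => ?_
                  rw [Finset.sum_mul]
                  refine Finset.sum_congr rfl fun a _ => ?_
                  rw [show (b - a).natAbs = (a - b).natAbs from by omega]
              _ ≤ ∑ b ∈ F, S * ‖T b f‖ ^ 2 := by
                  refine Finset.sum_le_sum fun b _ => ?_
                  exact mul_le_mul_of_nonneg_right (hrow b F) (sq_nonneg _)
              _ = S * Sig := by rw [hSg, Finset.mul_sum]
          linarith
      _ = M * S * Sig := by ring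
  -- conclude
  rcases eq_or_lt_of_le hSg0 with h0 | hpos
  · rw [← h0]
    exact mul_nonneg (mul_nonneg hM0 hS0) (sq_nonneg _)
  · have hsq : Sig ^ 2 ≤ (M * S * ‖f‖ ^ 2) * Sig := by
      calc Sig ^ 2 ≤ (‖g‖ * ‖f‖) ^ 2 := by
            rw [sq, sq]
            exact mul_le_mul hSgle hSgle hSg0 (mul_nonneg (norm_nonneg _) (norm_nonneg _))
        _ = ‖g‖ ^ 2 * ‖f‖ ^ 2 := by ring
        _ ≤ (M * S * Sig) * ‖f‖ ^ 2 := mul_le_mul_of_nonneg_right hg2 (sq_nonneg _)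
        _ = (M * S * ‖f‖ ^ 2) * Sig := by ring
    rw [sq] at hsq
    exact le_of_mul_le_mul_right (by linarith) hpos

end Aux

open scoped ENNReal

/-- L² norm squared as a lintegral. -/
lemma aux_lintegral {β : Type} [MeasurableSpace β] (ν : Measure β) (g : Lp ℂ 2 ν) :
    ∫⁻ y, (‖(g : β → ℂ) y‖₊ : ℝ≥0∞) ^ 2 ∂ν = ENNReal.ofReal (‖g‖ ^ 2) := by
  have h2 : (2 : ℝ≥0∞) ≠ 0 := by norm_num
  have h2' : (2 : ℝ≥0∞) ≠ ∞ := by norm_num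
  have hsn := eLpNorm_eq_lintegral_rpow_enorm_toReal (f := (g : β → ℂ)) (μ := ν) h2 h2'
  have htr : (2 : ℝ≥0∞).toReal = 2 := by norm_num
  rw [htr] at hsn
  simp only [enorm_eq_nnnorm] at hsn
  have hptw : ∀ y, (‖(g : β → ℂ) y‖₊ : ℝ≥0∞) ^ (2 : ℝ) = (‖(g : β → ℂ) y‖₊ : ℝ≥0∞) ^ (2 : ℕ) := by
    intro y
    rw [← ENNReal.rpow_natCast]
    norm_num
  have hI : ∫⁻ y, (‖(g : β → ℂ) y‖₊ : ℝ≥0∞) ^ 2 ∂ν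
      = (eLpNorm (g : β → ℂ) 2 ν) ^ (2 : ℕ) := by
    rw [hsn, ← ENNReal.rpow_natCast _ 2, ← ENNReal.rpow_mul]
    norm_num
  rw [hI]
  have hfin : eLpNorm (g : β → ℂ) 2 ν ≠ ∞ := Lp.eLpNorm_ne_top g
  rw [Lp.norm_def, ← ENNReal.toReal_pow, ENNReal.ofReal_toReal (ENNReal.pow_ne_top hfin)]

open MeasureTheory
open scoped ENNReal

/-- Square-function variant of the Cotlar–Stein almost orthogonality lemma. -/
theorem stmt9 :
    ∃ C' : ℝ, 0 < C' ∧
      ∀ (α β : Type) (_ : MeasurableSpace α) (_ : MeasurableSpace β)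
        (μ : Measure α) (ν : Measure β)
        (T : ℤ → (Lp ℂ 2 μ →L[ℂ] Lp ℂ 2 ν)) (C : ℕ → ℝ), (∀ n, 0 ≤ C n) →
        (∀ k₁ k₂ : ℤ,
          ‖(T k₁).comp (ContinuousLinearMap.adjoint (T k₂))‖ ≤ C (k₁ - k₂).natAbs) →
        Summable (fun k : ℤ => Real.sqrt (C k.natAbs)) →
        ∀ f : Lp ℂ 2 μ,
          ∫⁻ y, ∑' k : ℤ, (‖(T k f : β → ℂ) y‖₊ : ℝ≥0∞) ^ 2 ∂ν ≤
            ENNReal.ofReal (C' ^ 2 * (⨆ k : ℤ, ‖T k‖) * ∑' k : ℤ, Real.sqrt (C k.natAbs)) *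
              ENNReal.ofReal (‖f‖ ^ 2) := by
  refine ⟨1, one_pos, ?_⟩
  intro α β mα mβ μ ν T C hC hTT hS f
  set M : ℝ := ⨆ k : ℤ, ‖T k‖ with hM
  set S : ℝ := ∑' k : ℤ, Real.sqrt (C k.natAbs) with hSdef
  have hswap : ∫⁻ y, ∑' k : ℤ, (‖(T k f : β → ℂ) y‖₊ : ℝ≥0∞) ^ 2 ∂ν
      = ∑' k : ℤ, ∫⁻ y, (‖(T k f : β → ℂ) y‖₊ : ℝ≥0∞) ^ 2 ∂ν := by
    refine lintegral_tsum fun k => ?_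
    exact ((Lp.aestronglyMeasurable (T k f)).enorm.pow_const 2)
  rw [hswap]
  have hI : ∀ k : ℤ, ∫⁻ y, (‖(T k f : β → ℂ) y‖₊ : ℝ≥0∞) ^ 2 ∂ν
      = ENNReal.ofReal (‖T k f‖ ^ 2) := fun k => aux_lintegral ν (T k f)
  simp only [hI]
  have hbound : ∀ F : Finset ℤ, ∑ k ∈ F, ENNReal.ofReal (‖T k f‖ ^ 2)
      ≤ ENNReal.ofReal (M * S * ‖f‖ ^ 2) := by
    intro F
    rw [← ENNReal.ofReal_sum_of_nonneg fun k _ => sq_nonneg _]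
    exact ENNReal.ofReal_le_ofReal (aux_finsum T C hC hTT hS f F)
  have htsum : ∑' k : ℤ, ENNReal.ofReal (‖T k f‖ ^ 2)
      ≤ ENNReal.ofReal (M * S * ‖f‖ ^ 2) := by
    rw [ENNReal.tsum_eq_iSup_sum]
    exact iSup_le hbound
  refine htsum.trans (le_of_eq ?_)
  -- nonnegativity facts
  have hTbound : ∀ k : ℤ, ‖T k‖ ≤ Real.sqrt (C 0) := by
    intro k
    have h1 : ‖(T k).comp (ContinuousLinearMap.adjoint (T k))‖ = ‖T k‖ * ‖T k‖ := by
      have := ContinuousLinearMap.norm_adjoint_comp_self (ContinuousLinearMap.adjoint (T k))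
      rwa [ContinuousLinearMap.adjoint_adjoint, LinearIsometryEquiv.norm_map] at this
    have h2 := hTT k k
    simp only [sub_self, Int.natAbs_zero] at h2
    rw [h1] at h2
    have := Real.sqrt_le_sqrt h2
    rwa [← Real.sqrt_mul_self (norm_nonneg (T k))]
  have hbdd : BddAbove (Set.range fun k : ℤ => ‖T k‖) :=
    ⟨Real.sqrt (C 0), by rintro _ ⟨k, rfl⟩; exact hTbound k⟩
  have hM0 : 0 ≤ M := (norm_nonneg (T 0)).trans (le_ciSup hbdd 0)
  have hS0 : 0 ≤ S := tsum_nonneg fun k => Real.sqrt_nonneg _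
  rw [← ENNReal.ofReal_mul (by positivity)]
  congr 1
  ring
end
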